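/- Define α_i(N) = −(N(d−1)/i) · Σ_{j=0}^{i−1} (1−d)^j C(N−2i+j, N−2i) C(2i−2−j, i−1) for 1 ≤ i ≤ ⌊N/2⌋. Then α_i(N) equals the coefficient of g(y)^i in the formal power series expansion of (1+(d−1)y)^{−N} as a series in g(y) = y(1−y)/(1+(d−1)y)², i.e., (1+(d−1)y)^{−N} ≡ Σ_{i=0}^{⌊N/2⌋} α_i(N) (y(1−y))^i (1+(d−1)y)^{−2i} modulo terms of order y^{⌊N/2⌋+1}, with α_0(N) = 1. -/

import Mathlib

open Finset PowerSeries

namespace Stmt6Test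

noncomputable def UU (s : ℝ) : ℝ⟦X⟧ := 1 + C (R := ℝ) s * X
noncomputable def VV : ℝ⟦X⟧ := 1 - X
noncomputable def gg (s : ℝ) : ℝ⟦X⟧ := X * VV * ((UU s)⁻¹)^2
noncomputable def hh (s : ℝ) : ℝ⟦X⟧ := (UU s)^2 * VV⁻¹

lemma constU (s : ℝ) : constantCoeff (R := ℝ) (UU s) = 1 := by simp [UU]
lemma hUW (s : ℝ) : UU s * (UU s)⁻¹ = 1 :=
  PowerSeries.mul_inv_cancel _ (by simp [constU s])
lemma constV : constantCoeff (R := ℝ) VV = 1 := by simp [VV]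
lemma hVVi : VV * VV⁻¹ = 1 := PowerSeries.mul_inv_cancel _ (by simp [constV])


lemma geom (a : ℝ) : (UU a)⁻¹ = mk fun n => (-a)^n := by
  rw [PowerSeries.inv_eq_iff_mul_eq_one (by simp [constU a] : constantCoeff (R := ℝ) (UU a) ≠ 0)]
  ext n
  rw [UU, mul_add, mul_one, mul_comm (mk fun n => (-a)^n) (C (R := ℝ) a * X), mul_assoc]
  cases n with
  | zero => simp
  | succ n =>
    rw [map_add, coeff_mk, coeff_C_mul, coeff_succ_X_mul, coeff_mk, coeff_one]
    simp [pow_succ]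
    ring

lemma coeff_pow_mk (a : ℝ) (M n : ℕ) :
    coeff (R := ℝ) n ((mk fun j => (-a)^j : ℝ⟦X⟧)^(M+1)) = (-a)^n * ((n + M).choose M) := by
  induction M generalizing n with
  | zero => simp
  | succ M ih =>
    rw [pow_succ, coeff_mul, Finset.Nat.sum_antidiagonal_eq_sum_range_succ_mk]
    have key : ∀ j ∈ range (n+1),
        coeff (R := ℝ) j ((mk fun j => (-a)^j : ℝ⟦X⟧)^(M+1)) * coeff (R := ℝ) (n - j) (mk fun j => (-a)^j)
        = (-a)^n * ((j + M).choose M) := by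
      intro j hj
      have hj' := Finset.mem_range.mp hj
      rw [ih, coeff_mk, mul_right_comm, ← pow_add]
      congr 2
      omega
    rw [Finset.sum_congr rfl key, ← Finset.mul_sum]
    congr 1
    exact_mod_cast Nat.sum_range_add_choose n M

lemma hdU (s : ℝ) : d⁄dX ℝ (UU s) = C (R := ℝ) s := by
  rw [UU]
  simp [Derivation.leibniz, smul_eq_mul]

lemma hdW (s : ℝ) : d⁄dX ℝ ((UU s)⁻¹) = -((UU s)⁻¹)^2 * C (R := ℝ) s := by
  rw [derivative_inv', hdU]

lemma hdV : d⁄dX ℝ VV = -1 := by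
  rw [VV]; simp

lemma hdVi : d⁄dX ℝ (VV⁻¹) = (VV⁻¹)^2 := by
  rw [derivative_inv', hdV]; ring

lemma hdg (s : ℝ) : d⁄dX ℝ (gg s) =
    VV * ((UU s)⁻¹)^2 - X * ((UU s)⁻¹)^2 - 2 * C (R := ℝ) s * X * VV * ((UU s)⁻¹)^3 := by
  rw [gg]
  rw [Derivation.leibniz, Derivation.leibniz, Derivation.leibniz_pow, hdW, hdV, derivative_X]
  simp only [smul_eq_mul]
  ring

lemma hdh (s : ℝ) : d⁄dX ℝ (hh s) =
    2 * C (R := ℝ) s * UU s * VV⁻¹ + (UU s)^2 * (VV⁻¹)^2 := by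
  rw [hh]
  rw [Derivation.leibniz, Derivation.leibniz_pow, hdU, hdVi]
  simp only [smul_eq_mul]
  ring

lemma FID (s : ℝ) : d⁄dX ℝ (gg s) * (hh s)^2 + X * d⁄dX ℝ (hh s) = hh s := by
  rw [hdg, hdh, hh]
  set U := UU s
  set W := (UU s)⁻¹
  set Vi := VV⁻¹
  have h1 : U * W = 1 := hUW s
  have h2 : VV * Vi = 1 := hVVi
  linear_combination ((VV - X)*U^2*Vi^2*(U*W+1) - 2*(C (R := ℝ) s)*X*VV*U*Vi^2*((U*W)^2+U*W+1)) * h1 +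
    (U^2*Vi - 2*(C (R := ℝ) s)*X*U*Vi) * h2

end Stmt6Test

namespace Stmt6Test

lemma hgh (s : ℝ) : (VV * ((UU s)⁻¹)^2) * hh s = 1 := by
  rw [hh]
  have h1 : UU s * (UU s)⁻¹ = 1 := hUW s
  have h2 : VV * VV⁻¹ = 1 := hVVi
  linear_combination ((UU s * (UU s)⁻¹ + 1) * VV * VV⁻¹) * h1 + h2

lemma LemA (s : ℝ) (t : ℕ) : coeff (R := ℝ) (t+1) (d⁄dX ℝ (gg s) * hh s ^ (t+2)) = 0 := by
  have fid' : d⁄dX ℝ (gg s) * hh s ^ 2 = hh s - X * d⁄dX ℝ (hh s) := by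
    linear_combination FID s
  have key : d⁄dX ℝ (gg s) * hh s ^ (t+2) = hh s^(t+1) - X * (hh s^t * d⁄dX ℝ (hh s)) := by
    calc d⁄dX ℝ (gg s) * hh s ^ (t+2) = (d⁄dX ℝ (gg s) * hh s^2) * hh s^t := by ring
    _ = (hh s - X * d⁄dX ℝ (hh s)) * hh s ^ t := by rw [fid']
    _ = hh s^(t+1) - X * (hh s^t * d⁄dX ℝ (hh s)) := by ring
  have hd2 : d⁄dX ℝ (hh s ^ (t+1)) = (t+1 : ℕ) • (hh s ^ t * d⁄dX ℝ (hh s)) := by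
    rw [Derivation.leibniz_pow]
    simp [smul_eq_mul]
  have h3 : ((t:ℝ)+1) * coeff (R := ℝ) t (hh s ^ t * d⁄dX ℝ (hh s))
      = coeff (R := ℝ) (t+1) (hh s^(t+1)) * ((t:ℝ)+1) := by
    have h5 : coeff (R := ℝ) t (d⁄dX ℝ (hh s ^ (t+1))) = coeff (R := ℝ) (t+1) (hh s^(t+1)) * ((t:ℕ)+1) :=
      coeff_derivative _ _
    rw [hd2, map_nsmul, nsmul_eq_mul] at h5
    push_cast at h5 ⊢
    linarith [h5]
  have ht : ((t:ℝ)+1) ≠ 0 := by positivity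
  have h4 : coeff (R := ℝ) t (hh s ^ t * d⁄dX ℝ (hh s)) = coeff (R := ℝ) (t+1) (hh s^(t+1)) :=
    mul_left_cancel₀ ht (h3.trans (mul_comm _ _))
  rw [key, map_sub, coeff_succ_X_mul, h4, sub_self]

end Stmt6Test

namespace Stmt6Test

lemma coeff_g_pow_mul (s : ℝ) {i k : ℕ} (q : ℝ⟦X⟧) (h : k < i) :
    coeff (R := ℝ) k (gg s ^ i * q) = 0 := by
  have e : gg s ^ i * q = X ^ i * ((VV * ((UU s)⁻¹)^2) ^ i * q) := by
    rw [gg]; ring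
  rw [e, coeff_X_pow_mul', if_neg (by omega)]

lemma const_VW (s : ℝ) : constantCoeff (R := ℝ) (VV * ((UU s)⁻¹)^2) = 1 := by
  simp [VV, PowerSeries.constantCoeff_inv, constU]

lemma coeff_g_pow_self (s : ℝ) (k : ℕ) : coeff (R := ℝ) k (gg s ^ k) = 1 := by
  have e : gg s ^ k = X ^ k * (VV * ((UU s)⁻¹)^2) ^ k := by rw [gg]; ring
  rw [e, coeff_X_pow_mul', if_pos le_rfl, Nat.sub_self, coeff_zero_eq_constantCoeff,
    map_pow, const_VW, one_pow]

lemma vanish_mul (f q : ℝ⟦X⟧) (n : ℕ) (h : ∀ j ≤ n, coeff (R := ℝ) j f = 0) :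
    coeff (R := ℝ) n (f * q) = 0 := by
  rw [coeff_mul]
  apply Finset.sum_eq_zero
  intro p hp
  rw [Finset.HasAntidiagonal.mem_antidiagonal] at hp
  rw [h p.1 (by omega), zero_mul]

noncomputable def beta (s : ℝ) (N : ℕ) : ℕ → ℝ
  | k => coeff (R := ℝ) k (((UU s)⁻¹)^N) - ∑ i : Fin k, beta s N i * coeff (R := ℝ) k (gg s ^ (i:ℕ))
  decreasing_by exact i.2

lemma beta_spec (s : ℝ) (N k : ℕ) :
    coeff (R := ℝ) k (((UU s)⁻¹)^N) = ∑ i ∈ range (k+1), beta s N i * coeff (R := ℝ) k (gg s ^ i) := by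
  rw [Finset.sum_range_succ, coeff_g_pow_self, mul_one, beta, ← Fin.sum_univ_eq_sum_range]
  ring

lemma beta_full (s : ℝ) (N k K : ℕ) (h : k ≤ K) :
    coeff (R := ℝ) k (((UU s)⁻¹)^N) = ∑ i ∈ range (K+1), beta s N i * coeff (R := ℝ) k (gg s ^ i) := by
  rw [beta_spec s N k]
  apply Finset.sum_subset (Finset.range_subset_range.mpr (by omega))
  intro i hi hni
  have hki : k < i := by
    simp only [Finset.mem_range] at hi hni; omega
  have : coeff (R := ℝ) k (gg s ^ i) = 0 := by
    have := coeff_g_pow_mul s (1 : ℝ⟦X⟧) hki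
    rwa [mul_one] at this
  rw [this, mul_zero]

lemma Vi_eq : (VV : ℝ⟦X⟧)⁻¹ = mk fun n => (-(-1:ℝ))^n := by
  have hv : VV = UU (-1) := by
    rw [VV, UU, map_neg, map_one]; ring
  rw [hv, geom]

end Stmt6Test

namespace Stmt6Test

lemma beta_eq (s : ℝ) (N : ℕ) (hN : 2 ≤ N) (k : ℕ) (hk1 : 1 ≤ k) (hk2 : k ≤ N / 2) :
    (k:ℝ) * beta s N k
      = -((N:ℝ) * s) * ∑ j ∈ range k, (-s)^j * ((N - 2*k + j).choose (N - 2*k) : ℝ)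
          * ((2*k - 2 - j).choose (k-1) : ℝ) := by
  set m := N / 2 with hm
  have h2k : 2 * k ≤ N := by omega
  set E : ℝ⟦X⟧ := ((UU s)⁻¹)^N - ∑ i ∈ range (m+1), C (R := ℝ) (beta s N i) * gg s ^ i with hE_def
  have hE : ∀ j ≤ m, coeff (R := ℝ) j E = 0 := by
    intro j hj
    rw [hE_def, map_sub, map_sum]
    simp only [coeff_C_mul]
    rw [beta_full s N j m hj, sub_self]
  have hEh : coeff (R := ℝ) (k-1) (d⁄dX ℝ E * hh s ^ k) = 0 := by
    apply vanish_mul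
    intro j hj
    rw [coeff_derivative, hE (j+1) (by omega), zero_mul]
  -- expand the derivative
  have hdE : d⁄dX ℝ E = -((N:ℝ⟦X⟧)) * C (R := ℝ) s * ((UU s)⁻¹)^(N+1)
      - ∑ i ∈ range (m+1), C (R := ℝ) (beta s N i) * ((i:ℕ) • (gg s^(i-1) * d⁄dX ℝ (gg s))) := by
    rw [hE_def, map_sub, map_sum]
    congr 1
    · rw [Derivation.leibniz_pow, hdW]
      rw [smul_eq_mul, nsmul_eq_mul]
      have e1 : ((UU s)⁻¹)^(N-1) * ((UU s)⁻¹)^2 = ((UU s)⁻¹)^(N+1) := by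
        rw [← pow_add]; congr 1; omega
      linear_combination (-(N:ℝ⟦X⟧) * C (R := ℝ) s) * e1
    · apply Finset.sum_congr rfl
      intro i _
      rw [Derivation.leibniz, derivative_C, Derivation.leibniz_pow]
      simp only [smul_eq_mul, smul_zero, mul_zero, add_zero, nsmul_eq_mul]
  have hpow : ∀ a b : ℕ, (VV*((UU s)⁻¹)^2)^a * hh s ^ (a+b) = hh s ^ b := by
    intro a b
    rw [pow_add, ← mul_assoc, ← mul_pow, hgh, one_pow, one_mul]
  have hconst_dg : constantCoeff (R := ℝ) (d⁄dX ℝ (gg s)) = 1 := by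
    rw [hdg]
    simp [VV, PowerSeries.constantCoeff_inv, constU]
  have hconst_hh : constantCoeff (R := ℝ) (hh s) = 1 := by
    rw [hh]
    simp [VV, PowerSeries.constantCoeff_inv, constU]
  rw [hdE, sub_mul, map_sub, Finset.sum_mul, map_sum] at hEh
  have hsum : ∀ i ∈ range (m+1),
      coeff (R := ℝ) (k-1) (C (R := ℝ) (beta s N i) * ((i:ℕ) • (gg s^(i-1) * d⁄dX ℝ (gg s))) * hh s ^ k)
      = if i = k then (k:ℝ) * beta s N k else 0 := by
    intro i hi
    have e : C (R := ℝ) (beta s N i) * ((i:ℕ) • (gg s^(i-1) * d⁄dX ℝ (gg s))) * hh s ^ k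
        = C (R := ℝ) (beta s N i) * (C (R := ℝ) (i:ℝ) * (gg s^(i-1) * (d⁄dX ℝ (gg s) * hh s ^ k))) := by
      rw [nsmul_eq_mul, show ((i:ℕ):ℝ⟦X⟧) = C (R := ℝ) (i:ℝ) by simp]
      ring
    rw [e, coeff_C_mul, coeff_C_mul]
    rcases lt_trichotomy i k with hik | hik | hik
    · -- i < k
      rw [if_neg (by omega)]
      rcases Nat.eq_zero_or_pos i with h0 | h0
      · simp [h0]
      · have estr : gg s^(i-1) * (d⁄dX ℝ (gg s) * hh s ^ k)
            = X^(i-1) * (d⁄dX ℝ (gg s) * hh s ^ (k-i+1)) := by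
          have e2 : gg s ^ (i-1) = X^(i-1) * (VV*((UU s)⁻¹)^2)^(i-1) := by
            rw [gg]; ring
          have e3 : (i-1) + (k-i+1) = k := by omega
          calc gg s^(i-1) * (d⁄dX ℝ (gg s) * hh s ^ k)
              = X^(i-1) * (((VV*((UU s)⁻¹)^2)^(i-1) * hh s ^ ((i-1)+(k-i+1))) * d⁄dX ℝ (gg s)) := by
                rw [e2, e3]; ring
            _ = X^(i-1) * (d⁄dX ℝ (gg s) * hh s ^ (k-i+1)) := by rw [hpow]; ring
        rw [estr, coeff_X_pow_mul', if_pos (by omega)]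
        have e4 : k - 1 - (i-1) = (k-i-1) + 1 := by omega
        have e5 : k - i + 1 = (k-i-1) + 2 := by omega
        rw [e4, e5, LemA s (k-i-1), mul_zero, mul_zero]
    · -- i = k
      rw [if_pos hik, hik]
      have estr : gg s^(k-1) * (d⁄dX ℝ (gg s) * hh s ^ k)
          = X^(k-1) * (d⁄dX ℝ (gg s) * hh s ^ 1) := by
        have e2 : gg s ^ (k-1) = X^(k-1) * (VV*((UU s)⁻¹)^2)^(k-1) := by
          rw [gg]; ring
        have e3 : (k-1) + 1 = k := by omega
        calc gg s^(k-1) * (d⁄dX ℝ (gg s) * hh s ^ k)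
            = X^(k-1) * (((VV*((UU s)⁻¹)^2)^(k-1) * hh s ^ ((k-1)+1)) * d⁄dX ℝ (gg s)) := by
              rw [e2, e3]; ring
          _ = X^(k-1) * (d⁄dX ℝ (gg s) * hh s ^ 1) := by rw [hpow]; ring
      rw [estr, coeff_X_pow_mul', if_pos (by omega), show k-1-(k-1) = 0 by omega,
        coeff_zero_eq_constantCoeff, map_mul, map_pow, hconst_dg, hconst_hh]
      ring
    · -- k < i
      rw [if_neg (by omega)]
      have e2 : gg s^(i-1) * (d⁄dX ℝ (gg s) * hh s ^ k)
          = gg s^(i-1) * (d⁄dX ℝ (gg s) * hh s ^ k) := rfl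
      rw [coeff_g_pow_mul s _ (show k-1 < i-1 by omega), mul_zero, mul_zero]
  rw [Finset.sum_congr rfl hsum, Finset.sum_ite_eq' (range (m+1)) k,
    if_pos (Finset.mem_range.mpr (by omega))] at hEh
  -- now the first term
  have hcan : ((UU s)⁻¹)^(N+1) * hh s ^ k = ((UU s)⁻¹)^(N+1-2*k) * (VV⁻¹)^k := by
    have e1 : ((UU s)⁻¹)^(N+1) = ((UU s)⁻¹)^(N+1-2*k) * ((UU s)⁻¹)^(2*k) := by
      rw [← pow_add]; congr 1; omega
    have e2 : hh s ^ k = (UU s)^(2*k) * (VV⁻¹)^k := by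
      rw [hh, mul_pow, ← pow_mul]
    have h1 : ((UU s)⁻¹)^(2*k) * (UU s)^(2*k) = 1 := by
      rw [← mul_pow, mul_comm, hUW, one_pow]
    rw [e1, e2]
    linear_combination (((UU s)⁻¹)^(N+1-2*k) * (VV⁻¹)^k) * h1
  have hterm1 : coeff (R := ℝ) (k-1) (-((N:ℝ⟦X⟧)) * C (R := ℝ) s * ((UU s)⁻¹)^(N+1) * hh s ^ k)
      = -((N:ℝ) * s) * ∑ j ∈ range k, (-s)^j * ((N - 2*k + j).choose (N - 2*k) : ℝ)
          * ((2*k - 2 - j).choose (k-1) : ℝ) := by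
    have e : -((N:ℝ⟦X⟧)) * C (R := ℝ) s * ((UU s)⁻¹)^(N+1) * hh s ^ k
        = C (R := ℝ) (-((N:ℝ)*s)) * (((UU s)⁻¹)^(N+1) * hh s ^ k) := by
      rw [show (C (R := ℝ) (-((N:ℝ)*s))) = -((N:ℝ⟦X⟧)) * C (R := ℝ) s by rw [map_neg, map_mul, map_natCast]; ring]
      ring
    rw [e, coeff_C_mul, hcan]
    congr 1
    have eVi : ((VV : ℝ⟦X⟧)⁻¹)^k = (mk fun n => (-(-1:ℝ))^n : ℝ⟦X⟧)^((k-1)+1) := by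
      rw [Vi_eq, Nat.sub_add_cancel hk1]
    rw [geom, eVi, show N+1-2*k = (N-2*k)+1 by omega]
    rw [coeff_mul, Finset.Nat.sum_antidiagonal_eq_sum_range_succ_mk]
    apply Finset.sum_congr (by rw [Nat.succ_eq_add_one, Nat.sub_add_cancel hk1])
    intro j hj
    have hj' := Finset.mem_range.mp hj
    rw [coeff_pow_mk, coeff_pow_mk]
    have c1 : (j + (N - 2*k)) = (N - 2*k + j) := by omega
    have c2 : (k - 1 - j + (k-1)) = (2*k - 2 - j) := by omega
    rw [c1, c2]
    simp
  rw [hterm1] at hEh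
  linarith [hEh]

end Stmt6Test

namespace Stmt6Test

lemma beta_zero (s : ℝ) (N : ℕ) : beta s N 0 = 1 := by
  rw [beta]
  simp only [Finset.univ_eq_empty, Finset.sum_empty, sub_zero]
  rw [coeff_zero_eq_constantCoeff, map_pow, PowerSeries.constantCoeff_inv, constU]
  simp

end Stmt6Test


open Stmt6Test in
/-- With `α_0(N) = 1` and
`α_i(N) = −(N(d−1)/i) Σ_{j=0}^{i−1} (1−d)^j C(N−2i+j, N−2i) C(2i−2−j, i−1)`
for `1 ≤ i ≤ ⌊N/2⌋`, one has, in `ℝ[[y]]`,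
`(1+(d−1)y)^{−N} ≡ Σ_{i=0}^{⌊N/2⌋} α_i(N) (y(1−y))^i (1+(d−1)y)^{−2i}`
modulo terms of order `y^{⌊N/2⌋+1}`, i.e. all coefficients up to degree `⌊N/2⌋`
of the two power series agree. -/
theorem stmt_6 (N d : ℕ) (hN : 2 ≤ N) (hd : 2 ≤ d)
    (α : ℕ → ℝ) (hα0 : α 0 = 1)
    (hα : ∀ i, 1 ≤ i → i ≤ N / 2 →
      α i = -((N : ℝ) * ((d : ℝ) - 1) / i) *
        ∑ j ∈ range i, ((1 : ℝ) - d) ^ j *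
          (Nat.choose (N - 2 * i + j) (N - 2 * i) : ℝ) *
          (Nat.choose (2 * i - 2 - j) (i - 1) : ℝ)) :
    ∀ k ≤ N / 2,
      PowerSeries.coeff (R := ℝ) k ((1 + PowerSeries.C (R := ℝ) ((d : ℝ) - 1) * PowerSeries.X)⁻¹ ^ N) =
      PowerSeries.coeff (R := ℝ) k
        (∑ i ∈ range (N / 2 + 1),
          PowerSeries.C (R := ℝ) (α i) *
            (PowerSeries.X * (1 - PowerSeries.X)) ^ i *
            ((1 + PowerSeries.C (R := ℝ) ((d : ℝ) - 1) * PowerSeries.X)⁻¹) ^ (2 * i)) := by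
  intro k hk
  set s : ℝ := (d:ℝ) - 1 with hs
  have hUs : (1 + PowerSeries.C (R := ℝ) ((d : ℝ) - 1) * PowerSeries.X) = UU s := by rw [UU]
  have halphabeta : ∀ i ≤ N / 2, α i = beta s N i := by
    intro i hi
    rcases Nat.eq_zero_or_pos i with h0 | h0
    · rw [h0, hα0, beta_zero]
    · have hbe := beta_eq s N hN i h0 hi
      have hne : (i:ℝ) ≠ 0 := by positivity
      rw [hα i h0 hi]
      have hsd : ((1:ℝ) - d) = -s := by rw [hs]; ring
      rw [hsd]
      field_simp
      linear_combination -hbe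
  have hterm : ∀ i, PowerSeries.C (R := ℝ) (α i) * (PowerSeries.X * (1 - PowerSeries.X)) ^ i *
      ((1 + PowerSeries.C (R := ℝ) ((d : ℝ) - 1) * PowerSeries.X)⁻¹) ^ (2 * i)
      = PowerSeries.C (R := ℝ) (α i) * gg s ^ i := by
    intro i
    rw [hUs, pow_mul, mul_assoc, ← mul_pow, gg, VV]
  have hsum2 : (∑ i ∈ range (N / 2 + 1),
      PowerSeries.C (R := ℝ) (α i) * (PowerSeries.X * (1 - PowerSeries.X)) ^ i *
        ((1 + PowerSeries.C (R := ℝ) ((d : ℝ) - 1) * PowerSeries.X)⁻¹) ^ (2 * i))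
      = ∑ i ∈ range (N/2+1), PowerSeries.C (R := ℝ) (beta s N i) * gg s ^ i := by
    apply Finset.sum_congr rfl
    intro i hi
    rw [hterm i, halphabeta i (Nat.lt_succ_iff.mp (Finset.mem_range.mp hi))]
  rw [hsum2, hUs, map_sum, beta_full s N k (N/2) hk]
  apply Finset.sum_congr rfl
  intro i hi
  rw [coeff_C_mul]
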